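/- Let A be a finite multiset of positive integers with pairwise divisible elements, let s be the maximum element of A, and let b ≥ s be an integer divisible by s. Then the minimum number of parts in a partition of A into sub-multisets each of total sum at most b equals ⌈(sum of A)/b⌉; moreover there exists such a partition in which ⌈(sum of A)/b⌉ − 1 of the parts have total sum exactly b. -/
import Mathlib

/-- sum of join equals sum of sums -/
private lemma sum_sum (P : Multiset (Multiset ℕ)) : P.sum.sum = (P.map Multiset.sum).sum := by
  induction P using Multiset.induction with
  | empty => simp
  | cons a t ih => simp [ih]

/-- From a divisibility chain of positive divisors of `b` with total sum ≥ b,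
extract a sub-multiset of sum exactly `b`. -/
private lemma extract (b : ℕ) (A : Multiset ℕ)
    (hpos : ∀ a ∈ A, 0 < a) (hdvd : ∀ a ∈ A, a ∣ b)
    (hchain : ∀ a ∈ A, ∀ a' ∈ A, a ∣ a' ∨ a' ∣ a)
    (hsum : b ≤ A.sum) : ∃ S, S ≤ A ∧ S.sum = b := by
  induction A using Multiset.strongInductionOn generalizing b with
  | ih A IH =>
    rcases Nat.eq_zero_or_pos b with hb0 | hb0
    · exact ⟨0, Multiset.zero_le A, by simp [hb0]⟩
    have hA0 : A ≠ 0 := by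
      rintro rfl; simp at hsum; omega
    -- get a maximal element m of A
    have hfs : A.toFinset.Nonempty := by
      simpa [Multiset.toFinset_nonempty] using hA0
    set m := A.toFinset.max' hfs with hm
    have hmA : m ∈ A := by
      have := A.toFinset.max'_mem hfs; simpa using this
    have hmmax : ∀ a ∈ A, a ≤ m := fun a ha =>
      A.toFinset.le_max' a (by simpa using ha)
    have hmb : m ∣ b := hdvd m hmA
    have hmpos : 0 < m := hpos m hmA
    have hmle : m ≤ b := Nat.le_of_dvd hb0 hmb
    rcases eq_or_lt_of_le hmle with heq | hlt
    · exact ⟨{m}, by simpa using Multiset.singleton_le.2 hmA, by simp [heq]⟩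
    · -- recurse on A.erase m with b - m
      set A' := A.erase m with hA'
      have hA'lt : A' < A := Multiset.erase_lt.2 hmA
      have hA'le : A' ≤ A := le_of_lt hA'lt
      have hmem : ∀ a ∈ A', a ∈ A := fun a ha => Multiset.mem_of_le hA'le ha
      have hdvd' : ∀ a ∈ A', a ∣ (b - m) := by
        intro a ha
        have haA := hmem a ha
        have ham : a ∣ m := by
          rcases hchain a haA m hmA with h | h
          · exact h
          · have : a = m := le_antisymm (hmmax a haA) (Nat.le_of_dvd (hpos a haA) h)
            simp [this]
        exact Nat.dvd_sub (hdvd a haA) ham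
      have hsum' : b - m ≤ A'.sum := by
        have : A.sum = m + A'.sum := by
          rw [hA', ← Multiset.sum_cons, Multiset.cons_erase hmA]
        omega
      obtain ⟨S', hS'le, hS'sum⟩ := IH A' hA'lt (b - m)
        (fun a ha => hpos a (hmem a ha)) hdvd'
        (fun a ha a' ha' => hchain a (hmem a ha) a' (hmem a' ha')) hsum'
      refine ⟨m ::ₘ S', ?_, ?_⟩
      · calc m ::ₘ S' ≤ m ::ₘ A' := Multiset.cons_le_cons m hS'le
          _ = A := Multiset.cons_erase hmA
      · simp [hS'sum]; omega

/-- The greedy partition: parts of sum ≤ b, optimal count, all but (at most) one of sum b. -/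
private lemma greedy (b : ℕ) (hb : 0 < b) (A : Multiset ℕ)
    (hpos : ∀ a ∈ A, 0 < a) (hdvd : ∀ a ∈ A, a ∣ b)
    (hchain : ∀ a ∈ A, ∀ a' ∈ A, a ∣ a' ∨ a' ∣ a) :
    ∃ P : Multiset (Multiset ℕ),
      P.sum = A ∧ (∀ p ∈ P, p.sum ≤ b) ∧
      P.card = (A.sum + b - 1) / b ∧
      (A.sum + b - 1) / b - 1 ≤ (P.filter (fun p => p.sum = b)).card := by
  induction A using Multiset.strongInductionOn with
  | ih A IH =>
    rcases le_or_gt A.sum b with hle | hgt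
    · rcases eq_or_ne A 0 with rfl | hA0
      · have h0 : (b - 1) / b = 0 := Nat.div_eq_of_lt (by omega)
        exact ⟨0, by simp, by simp, by simp [h0], by simp [h0]⟩
      · have hApos : 0 < A.sum := by
          obtain ⟨a, ha⟩ := Multiset.exists_mem_of_ne_zero hA0
          exact lt_of_lt_of_le (hpos a ha) (Multiset.le_sum_of_mem ha)
        have hk : (A.sum + b - 1) / b = 1 :=
          Nat.div_eq_of_lt_le (by omega) (by omega)
        refine ⟨{A}, by simp, by simpa using hle, by simp [hk], by simp [hk]⟩
    · -- extract a part of sum exactly b, recurse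
      obtain ⟨S, hSle, hSsum⟩ := extract b A hpos hdvd hchain (le_of_lt hgt)
      have hS0 : S ≠ 0 := by rintro rfl; simp at hSsum; omega
      set A' := A - S with hA'
      have hAeq : A' + S = A := tsub_add_cancel_of_le hSle
      have hsumeq : A'.sum + b = A.sum := by
        rw [← hSsum, ← hAeq]; simp
      have hA'lt : A' < A := by
        refine lt_of_le_of_ne (tsub_le_self) ?_
        intro h
        have := hsumeq
        rw [h] at this
        omega
      have hmem : ∀ a ∈ A', a ∈ A := fun a ha => Multiset.mem_of_le (le_of_lt hA'lt) ha
      obtain ⟨P', hP'sum, hP'le, hP'card, hP'filter⟩ := IH A' hA'lt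
        (fun a ha => hpos a (hmem a ha)) (fun a ha => hdvd a (hmem a ha))
        (fun a ha a' ha' => hchain a (hmem a ha) a' (hmem a' ha'))
      have hkey : (A.sum + b - 1) / b = (A'.sum + b - 1) / b + 1 := by
        have h1 : A.sum + b - 1 = (A'.sum + b - 1) + b := by omega
        rw [h1, Nat.add_div_right _ hb]
      refine ⟨S ::ₘ P', ?_, ?_, ?_, ?_⟩
      · rw [Multiset.sum_cons, hP'sum, add_comm]
        exact hAeq
      · intro p hp
        rcases Multiset.mem_cons.1 hp with rfl | hp'
        · omega
        · exact hP'le p hp'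
      · simp [hP'card, hkey]
      · rw [hkey, Multiset.filter_cons_of_pos _ (by simp [hSsum])]
        simp only [Multiset.card_cons]
        omega

theorem divisible_multiset_partition
    (A : Multiset ℕ) (s b : ℕ)
    (hpos : ∀ a ∈ A, 0 < a)
    (hchain : ∀ a ∈ A, ∀ a' ∈ A, a ∣ a' ∨ a' ∣ a)
    (hs : s ∈ A) (hmax : ∀ a ∈ A, a ≤ s)
    (hb : s ≤ b) (hdvd : s ∣ b) :
    IsLeast {n : ℕ | ∃ P : Multiset (Multiset ℕ),
        P.sum = A ∧ (∀ p ∈ P, p.sum ≤ b) ∧ P.card = n}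
      ((A.sum + b - 1) / b) ∧
    ∃ P : Multiset (Multiset ℕ),
      P.sum = A ∧ (∀ p ∈ P, p.sum ≤ b) ∧
      P.card = (A.sum + b - 1) / b ∧
      (A.sum + b - 1) / b - 1 ≤ (P.filter (fun p => p.sum = b)).card := by
  have hbpos : 0 < b := lt_of_lt_of_le (hpos s hs) hb
  have hdvdb : ∀ a ∈ A, a ∣ b := by
    intro a ha
    have : a ∣ s := by
      rcases hchain a ha s hs with h | h
      · exact h
      · have : a = s := le_antisymm (hmax a ha) (Nat.le_of_dvd (hpos a ha) h)
        simp [this]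
    exact this.trans hdvd
  obtain ⟨P, h1, h2, h3, h4⟩ := greedy b hbpos A hpos hdvdb hchain
  refine ⟨⟨⟨P, h1, h2, h3⟩, ?_⟩, P, h1, h2, h3, h4⟩
  rintro n ⟨Q, hQsum, hQle, hQcard⟩
  have hsum : A.sum ≤ n * b := by
    have h5 : A.sum = (Q.map Multiset.sum).sum := by rw [← hQsum, sum_sum]
    have h6 : (Q.map Multiset.sum).sum ≤ (Q.map Multiset.sum).card • b :=
      Multiset.sum_le_card_nsmul _ _ (by
        intro x hx
        obtain ⟨p, hp, rfl⟩ := Multiset.mem_map.1 hx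
        exact hQle p hp)
    simpa [h5, hQcard, Multiset.card_map, smul_eq_mul] using h6
  have hlt : A.sum + b - 1 < (n + 1) * b := by
    have : (n + 1) * b = n * b + b := by ring
    omega
  have := (Nat.div_lt_iff_lt_mul hbpos).2 hlt
  omega
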